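/- Let V be a 2n-dimensional real vector space with non-degenerate 2-form Ω, and let L := Ω∧(−). For 2 ≤ s ≤ n−2, if ω is a non-degenerate 2-form and θ_{(s)} a 1-form with d(ω^s) = θ_{(s)}∧ω^s, then dω = (1/s)·θ_{(s)}∧ω. -/

import Mathlib

open ExteriorAlgebra

namespace LCKaux
variable {W : Type*} [AddCommGroup W] [Module ℝ W]

local infixl:70 "⌋" => CliffordAlgebra.contractLeft (R := ℝ) (M := W) (Q := 0)

lemma ι_anticomm (u v : W) : ι ℝ u * ι ℝ v = -(ι ℝ v * ι ℝ u) :=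
  eq_neg_of_add_eq_zero_left (ι_add_mul_swap u v)

lemma mem_pow_mul {p q : ℕ} {x y : ExteriorAlgebra ℝ W} (hx : x ∈ ⋀[ℝ]^p W)
    (hy : y ∈ ⋀[ℝ]^q W) : x * y ∈ ⋀[ℝ]^(p+q) W := by
  show x * y ∈ LinearMap.range (ι ℝ : W →ₗ[ℝ] ExteriorAlgebra ℝ W) ^ (p+q)
  rw [pow_add]
  exact Submodule.mul_mem_mul hx hy

lemma ι_mem_one (u : W) : ι ℝ u ∈ ⋀[ℝ]^1 W := by
  show ι ℝ u ∈ LinearMap.range (ι ℝ : W →ₗ[ℝ] ExteriorAlgebra ℝ W) ^ 1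
  rw [pow_one]
  exact ⟨u, rfl⟩

lemma mem_two_mul_induction {a : ExteriorAlgebra ℝ W} (ha : a ∈ ⋀[ℝ]^2 W)
    {C : ExteriorAlgebra ℝ W → Prop}
    (hm : ∀ u v : W, C (ι ℝ u * ι ℝ v)) (hadd : ∀ x y, C x → C y → C (x + y)) : C a := by
  have ha' : a ∈ LinearMap.range (ι ℝ : W →ₗ[ℝ] ExteriorAlgebra ℝ W) *
      LinearMap.range (ι ℝ) := by
    have : a ∈ LinearMap.range (ι ℝ : W →ₗ[ℝ] ExteriorAlgebra ℝ W) ^ 2 := ha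
    rwa [pow_two] at this
  refine Submodule.mul_induction_on ha' ?_ fun x y hx hy => hadd x y hx hy
  rintro p ⟨u, rfl⟩ q ⟨v, rfl⟩
  exact hm u v

/-- pairs of vectors are central -/
lemma ι_ι_mul_comm (u v : W) (x : ExteriorAlgebra ℝ W) :
    (ι ℝ u * ι ℝ v) * x = x * (ι ℝ u * ι ℝ v) := by
  induction x using CliffordAlgebra.left_induction with
  | algebraMap r => rw [← Algebra.commutes]
  | add x y hx hy => rw [mul_add, add_mul, hx, hy]
  | ι_mul x m hx =>
      have h1 : ι ℝ u * ι ℝ v * ι ℝ m = ι ℝ m * (ι ℝ u * ι ℝ v) := by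
        rw [mul_assoc, ι_anticomm v m, mul_neg, ← mul_assoc, ι_anticomm u m, neg_mul,
          neg_neg, mul_assoc]
      rw [← mul_assoc, h1, mul_assoc, hx, ← mul_assoc]

lemma central_of_mem_two {a : ExteriorAlgebra ℝ W} (ha : a ∈ ⋀[ℝ]^2 W)
    (x : ExteriorAlgebra ℝ W) : a * x = x * a :=
  mem_two_mul_induction ha (C := fun a => a * x = x * a) (fun u v => ι_ι_mul_comm u v x)
    (fun p q hp hq => by beta_reduce; rw [add_mul, mul_add, hp, hq])

lemma contract_mem_one' {φ : Module.Dual ℝ W} {x : ExteriorAlgebra ℝ W}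
    (hx : x ∈ (1 : Submodule ℝ (ExteriorAlgebra ℝ W))) : φ⌋x = 0 := by
  obtain ⟨r, rfl⟩ := Submodule.mem_one.mp hx
  exact CliffordAlgebra.contractLeft_algebraMap _ _ _

/-- contraction lowers degree by one -/
lemma contract_mem_aux (φ : Module.Dual ℝ W) (i : ℕ) (y : ExteriorAlgebra ℝ W)
    (hy : y ∈ ⋀[ℝ]^i W) : φ⌋y ∈ ⋀[ℝ]^(i-1) W ∧ (i = 0 → φ⌋y = 0) := by
  induction hy using Submodule.pow_induction_on_left' with
  | algebraMap r =>
      refine ⟨?_, fun _ => ?_⟩ <;>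
        simp [CliffordAlgebra.contractLeft_algebraMap]
  | add x y i hx hy ihx ihy =>
      exact ⟨by rw [map_add]; exact Submodule.add_mem _ ihx.1 ihy.1,
        fun h => by rw [map_add, ihx.2 h, ihy.2 h, add_zero]⟩
  | mem_mul m hm i x hx ih =>
      obtain ⟨u, rfl⟩ := hm
      refine ⟨?_, fun h => absurd h (Nat.succ_ne_zero i)⟩
      rw [CliffordAlgebra.contractLeft_ι_mul]
      rcases Nat.eq_zero_or_pos i with hi | hi
      · subst hi
        rw [ih.2 rfl, mul_zero, sub_zero]
        simpa using Submodule.smul_mem _ _ hx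
      · refine Submodule.sub_mem _ ?_ ?_
        · have h1 : i.succ - 1 = i := by omega
          rw [h1]; exact Submodule.smul_mem _ _ hx
        · have h2 : i.succ - 1 = 1 + (i - 1) := by omega
          rw [h2]
          exact mem_pow_mul (ι_mem_one u) ih.1

lemma contract_mem (φ : Module.Dual ℝ W) {q : ℕ} {x : ExteriorAlgebra ℝ W}
    (hx : x ∈ ⋀[ℝ]^(q+1) W) : φ⌋x ∈ ⋀[ℝ]^q W := by
  simpa using (contract_mem_aux φ (q+1) x hx).1

/-- the Euler (degree-counting) identity -/
lemma euler {N : ℕ} (c : Fin N → W) (γ : Fin N → Module.Dual ℝ W)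
    (hdual : ∀ m : W, ∑ i, γ i m • c i = m) {q : ℕ} {x : ExteriorAlgebra ℝ W}
    (hx : x ∈ ⋀[ℝ]^q W) :
    ∑ i, ι ℝ (c i) * (γ i⌋x) = (q : ℝ) • x := by
  induction hx using Submodule.pow_induction_on_left' with
  | algebraMap r => simp [CliffordAlgebra.contractLeft_algebraMap]
  | add x y i hx hy ihx ihy =>
      simp only [map_add, mul_add, Finset.sum_add_distrib, ihx, ihy, smul_add]
  | mem_mul m hm i x hx ih =>
      obtain ⟨u, rfl⟩ := hm
      have step : ∀ i0 : Fin N, ι ℝ (c i0) * (γ i0⌋(ι ℝ u * x))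
          = γ i0 u • (ι ℝ (c i0) * x) + ι ℝ u * (ι ℝ (c i0) * (γ i0⌋x)) := by
        intro i0
        rw [CliffordAlgebra.contractLeft_ι_mul, mul_sub, mul_smul_comm, ← mul_assoc,
          ι_anticomm (c i0) u, neg_mul, mul_assoc, sub_neg_eq_add]
      rw [Finset.sum_congr rfl fun i0 _ => step i0, Finset.sum_add_distrib,
        ← Finset.mul_sum, ih]
      have h1 : ∑ i0, γ i0 u • (ι ℝ (c i0) * x) = (∑ i0, γ i0 u • ι ℝ (c i0)) * x := by
        rw [Finset.sum_mul]; simp [smul_mul_assoc]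
      have h2 : (∑ i0, γ i0 u • ι ℝ (c i0)) = ι ℝ u := by
        simp_rw [← map_smul, ← map_sum, hdual]
      rw [h1, h2, mul_smul_comm, Nat.cast_succ, add_smul, one_smul, add_comm]

/-- product rule for contraction against a 2-form -/
lemma contract_two_mul (φ : Module.Dual ℝ W) {a : ExteriorAlgebra ℝ W}
    (ha : a ∈ ⋀[ℝ]^2 W) (x : ExteriorAlgebra ℝ W) :
    φ⌋(a * x) = (φ⌋a) * x + a * (φ⌋x) := by
  refine mem_two_mul_induction ha
    (C := fun a => φ⌋(a * x) = (φ⌋a) * x + a * (φ⌋x)) (fun u v => ?_) (fun p q hp hq => ?_)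
  · beta_reduce
    rw [mul_assoc, CliffordAlgebra.contractLeft_ι_mul, CliffordAlgebra.contractLeft_ι_mul,
      CliffordAlgebra.contractLeft_ι_mul, CliffordAlgebra.contractLeft_ι]
    simp only [Algebra.algebraMap_eq_smul_one, mul_sub, sub_mul, smul_mul_assoc,
      mul_smul_comm, mul_one, one_mul, mul_assoc]
    abel
  · beta_reduce at hp hq ⊢
    rw [add_mul, map_add, map_add, hp, hq, add_mul, add_mul]
    abel

/-! ### Vanishing of long products from a small subspace -/

/-- products of `m` vectors from `K` -/
def genSet (K : Submodule ℝ W) (m : ℕ) : Set (ExteriorAlgebra ℝ W) :=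
  {x | ∃ v : Fin m → W, (∀ i, v i ∈ K) ∧ x = ιMulti ℝ m v}

lemma map_pow_le_span_genSet (K : Submodule ℝ W) (m : ℕ) :
    (K.map (ι ℝ : W →ₗ[ℝ] ExteriorAlgebra ℝ W)) ^ m ≤ Submodule.span ℝ (genSet K m) := by
  induction m with
  | zero =>
      rw [pow_zero]
      rw [Submodule.one_eq_span]
      refine Submodule.span_le.mpr ?_
      rintro x ⟨⟩
      exact Submodule.subset_span ⟨fun i => 0, fun i => i.elim0,
        by simp [ιMulti_apply]⟩
  | succ m ih =>
      rw [pow_succ']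
      refine Submodule.mul_le.mpr fun a ha y hy => ?_
      obtain ⟨k, hk, rfl⟩ := ha
      have hy' : y ∈ Submodule.span ℝ (genSet K m) := ih hy
      have : ι ℝ k * y ∈ Submodule.map (LinearMap.mulLeft ℝ (ι ℝ k))
          (Submodule.span ℝ (genSet K m)) := ⟨y, hy', rfl⟩
      rw [Submodule.map_span] at this
      refine Submodule.span_le.mpr ?_ this
      rintro x ⟨z, ⟨v, hv, rfl⟩, rfl⟩
      refine Submodule.subset_span ⟨Fin.cons k v, fun i => ?_, ?_⟩
      · exact Fin.cases (by simpa using hk) (fun j => by simpa using hv j) i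
      · show ι ℝ k * ιMulti ℝ m v = ιMulti ℝ (m+1) (Fin.cons k v)
        rw [ιMulti_apply, ιMulti_apply, List.ofFn_succ, List.prod_cons]
        simp [Fin.cons]

lemma pow_map_eq_zero [FiniteDimensional ℝ W] {K : Submodule ℝ W} {m : ℕ}
    (h : Module.finrank ℝ K < m) {x : ExteriorAlgebra ℝ W}
    (hx : x ∈ (K.map (ι ℝ : W →ₗ[ℝ] ExteriorAlgebra ℝ W)) ^ m) : x = 0 := by
  have h0 : genSet K m ⊆ {(0 : ExteriorAlgebra ℝ W)} := by
    rintro x ⟨v, hv, rfl⟩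
    have hdep : ¬ LinearIndependent ℝ v := by
      intro hind
      have heq : v = K.subtype ∘ (fun i => (⟨v i, hv i⟩ : K)) := rfl
      rw [heq] at hind
      have := (hind.of_comp K.subtype).fintype_card_le_finrank
      simp only [Fintype.card_fin] at this
      omega
    simp only [Set.mem_singleton_iff]
    exact AlternatingMap.map_linearDependent _ _ hdep
  have := (map_pow_le_span_genSet K m).trans (Submodule.span_mono h0) hx
  simpa [Submodule.span_singleton_eq_bot] using this

lemma pow_mem_pow_submodule {P : Submodule ℝ (ExteriorAlgebra ℝ W)}
    {x : ExteriorAlgebra ℝ W} (hx : x ∈ P ^ 2) (j : ℕ) : x ^ j ∈ P ^ (2 * j) := by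
  induction j with
  | zero =>
      show (x : ExteriorAlgebra ℝ W) ^ 0 ∈ P ^ (2 * 0)
      exact Submodule.mem_one.mpr ⟨1, by rw [map_one, pow_zero]⟩
  | succ j ih =>
      have : x ^ (j + 1) = x ^ j * x := pow_succ x j
      rw [this]
      have h2 : 2 * (j + 1) = 2 * j + 2 := by ring
      rw [h2, pow_add]
      exact Submodule.mul_mem_mul ih hx

/-- decomposition of a 2-vector along a hyperplane -/
lemma two_form_decomp {φ : Module.Dual ℝ W} {v : W} (hv : φ v = 1)
    {a : ExteriorAlgebra ℝ W} (ha : a ∈ ⋀[ℝ]^2 W) :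
    a - ι ℝ v * (φ⌋a) ∈ ((LinearMap.ker φ).map (ι ℝ : W →ₗ[ℝ] ExteriorAlgebra ℝ W)) ^ 2 := by
  refine mem_two_mul_induction ha
    (C := fun a => a - ι ℝ v * (φ⌋a) ∈ ((LinearMap.ker φ).map (ι ℝ)) ^ 2)
    (fun x y => ?_) (fun p q hp hq => ?_)
  · beta_reduce
    have hkey : ι ℝ x * ι ℝ y - ι ℝ v * (φ⌋(ι ℝ x * ι ℝ y))
        = ι ℝ (x - φ x • v) * ι ℝ (y - φ y • v) := by
      rw [CliffordAlgebra.contractLeft_ι_mul, CliffordAlgebra.contractLeft_ι]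
      simp only [map_sub, map_smul, Algebra.algebraMap_eq_smul_one]
      simp only [mul_sub, sub_mul, mul_smul_comm, smul_mul_assoc, mul_one, smul_smul]
      have : (ι ℝ v : ExteriorAlgebra ℝ W) * ι ℝ v = 0 := ι_sq_zero v
      rw [this]
      simp only [smul_zero, sub_zero]
      rw [ι_anticomm v x]
      simp only [smul_neg, mul_comm (φ x) (φ y)]
      abel
    rw [hkey]
    show _ ∈ ((LinearMap.ker φ).map (ι ℝ)) ^ 2
    rw [pow_two]
    refine Submodule.mul_mem_mul ⟨x - φ x • v, ?_, rfl⟩ ⟨y - φ y • v, ?_, rfl⟩ <;>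
      simp [LinearMap.mem_ker, hv]
  · beta_reduce at hp hq ⊢
    rw [map_add, mul_add]
    have h := Submodule.add_mem _ hp hq
    convert h using 1
    abel

/-- Nondegeneracy: if `ω^n ≠ 0` then no nonzero functional annihilates `ω`. -/
lemma contract_ne_zero [FiniteDimensional ℝ W] {n : ℕ} (hdim : Module.finrank ℝ W = 2 * n)
    (hn : 0 < n) {a : ExteriorAlgebra ℝ W} (ha : a ∈ ⋀[ℝ]^2 W) (hnd : a ^ n ≠ 0)
    {φ : Module.Dual ℝ W} (hφ : φ⌋a = 0) : φ = 0 := by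
  by_contra hne
  obtain ⟨u, hu⟩ := DFunLike.ne_iff.mp hne
  simp only [LinearMap.zero_apply] at hu
  set v := (φ u)⁻¹ • u with hv_def
  have hv : φ v = 1 := by simp [hv_def]; field_simp
  have hmem : a ∈ ((LinearMap.ker φ).map (ι ℝ : W →ₗ[ℝ] ExteriorAlgebra ℝ W)) ^ 2 := by
    have := two_form_decomp hv ha
    rwa [hφ, mul_zero, sub_zero] at this
  have hpow : a ^ n ∈ ((LinearMap.ker φ).map (ι ℝ : W →ₗ[ℝ] ExteriorAlgebra ℝ W)) ^ (2 * n) :=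
    pow_mem_pow_submodule hmem n
  have hker : Module.finrank ℝ (LinearMap.ker φ) < 2 * n := by
    have hrank := LinearMap.finrank_range_add_finrank_ker φ
    have hrange : Module.finrank ℝ (LinearMap.range φ) = 1 := by
      have : LinearMap.range φ = ⊤ := LinearMap.range_eq_top.mpr
        (fun c => ⟨c • v, by simp [hv]⟩)
      rw [this]
      simpa using Module.finrank_self ℝ
    omega
  exact hnd (pow_map_eq_zero hker hpow)

/-! ### The dual Lefschetz operator -/

set_option maxHeartbeats 1000000 in
lemma exists_lambda [FiniteDimensional ℝ W] {n : ℕ} (hdim : Module.finrank ℝ W = 2*n)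
    (hn : 0 < n) {a : ExteriorAlgebra ℝ W} (ha : a ∈ ⋀[ℝ]^2 W) (hnd : a ^ n ≠ 0) :
    ∃ Λop : ExteriorAlgebra ℝ W →ₗ[ℝ] ExteriorAlgebra ℝ W,
      (∀ x ∈ ⋀[ℝ]^1 W, Λop x = 0) ∧
      (∀ x ∈ ⋀[ℝ]^3 W, Λop x ∈ ⋀[ℝ]^1 W) ∧
      ∀ (q : ℕ) (x : ExteriorAlgebra ℝ W), x ∈ ⋀[ℝ]^q W →
        Λop (a * x) = a * Λop x + ((n : ℝ) - q) • x := by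
  classical
  have hι : Function.Injective (ι ℝ : W →ₗ[ℝ] ExteriorAlgebra ℝ W) :=
    fun x y h => (ι_inj ℝ x y).mp h
  have hcon : ∀ φ : Module.Dual ℝ W,
      (φ⌋a) ∈ LinearMap.range (ι ℝ : W →ₗ[ℝ] ExteriorAlgebra ℝ W) := by
    intro φ
    have h2 : a ∈ ⋀[ℝ]^(1+1) W := ha
    have := contract_mem φ h2
    rwa [show ⋀[ℝ]^1 W = LinearMap.range (ι ℝ : W →ₗ[ℝ] ExteriorAlgebra ℝ W) from pow_one _]
      at this
  set F : Module.Dual ℝ W →ₗ[ℝ] ExteriorAlgebra ℝ W :=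
    (CliffordAlgebra.contractLeft (Q := (0 : QuadraticForm ℝ W))).flip a with hF
  have hFcon : ∀ φ, F φ ∈ LinearMap.range (ι ℝ : W →ₗ[ℝ] ExteriorAlgebra ℝ W) := hcon
  set e := LinearEquiv.ofInjective (ι ℝ : W →ₗ[ℝ] ExteriorAlgebra ℝ W) hι with he
  set T : Module.Dual ℝ W →ₗ[ℝ] W :=
    e.symm.toLinearMap ∘ₗ (F.codRestrict (LinearMap.range (ι ℝ)) hFcon) with hTdef
  have hT : ∀ φ, ι ℝ (T φ) = φ⌋a := by
    intro φ
    have : (e (T φ) : ExteriorAlgebra ℝ W) = ι ℝ (T φ) := rfl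
    rw [← this]
    show ((e (e.symm _) : LinearMap.range (ι ℝ)) : ExteriorAlgebra ℝ W) = φ⌋a
    rw [e.apply_symm_apply]
    rfl
  have hTinj : Function.Injective T := by
    rw [← LinearMap.ker_eq_bot, LinearMap.ker_eq_bot']
    intro φ hφ
    have : φ⌋a = 0 := by rw [← hT φ, hφ, map_zero]
    exact contract_ne_zero hdim hn ha hnd this
  have hTsurj : Function.Surjective T :=
    (LinearMap.injective_iff_surjective_of_finrank_eq_finrank Subspace.dual_finrank_eq).mp hTinj
  set Teq := LinearEquiv.ofBijective T ⟨hTinj, hTsurj⟩ with hTeq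
  -- skew symmetry of the pairing
  have hskew : ∀ φ ψ : Module.Dual ℝ W, φ (T ψ) = -(ψ (T φ)) := by
    intro φ ψ
    have h1 : φ⌋(ψ⌋a) = algebraMap ℝ _ (φ (T ψ)) := by
      rw [← hT ψ, CliffordAlgebra.contractLeft_ι]
    have h2 : ψ⌋(φ⌋a) = algebraMap ℝ _ (ψ (T φ)) := by
      rw [← hT φ, CliffordAlgebra.contractLeft_ι]
    have h3 := CliffordAlgebra.contractLeft_comm (M := W) φ ψ a
    rw [h1, h2, ← map_neg] at h3
    exact (ExteriorAlgebra.algebraMap_inj (M := W) _ _).mp h3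
  -- basis and the dual families
  set b := Module.finBasis ℝ W with hb
  set σ : Fin (Module.finrank ℝ W) → Module.Dual ℝ W := fun i => Teq.symm (b i) with hσ
  have hTσ : ∀ i, T (σ i) = b i := fun i => Teq.apply_symm_apply (b i)
  have hdual1 : ∀ m : W, ∑ i, b.coord i m • b i = m := by
    intro m; simpa [Module.Basis.coord_apply] using b.sum_repr m
  have hdual2 : ∀ m : W, ∑ i, (-(σ i)) m • T (b.coord i) = m := by
    intro m
    obtain ⟨ψ, rfl⟩ := Teq.surjective m
    have hterm : ∀ i, (-(σ i)) (Teq ψ) • T (b.coord i) = T ((ψ (b i)) • b.coord i) := by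
      intro i
      have : (σ i) (T ψ) = -(ψ (T (σ i))) := hskew (σ i) ψ
      rw [map_smul]
      show (-(σ i)) (T ψ) • T (b.coord i) = ψ (b i) • T (b.coord i)
      rw [LinearMap.neg_apply, this, hTσ, neg_neg]
    rw [Finset.sum_congr rfl fun i _ => hterm i, ← map_sum, b.sum_dual_apply_smul_coord]
    rfl
  -- the operator
  set Λop : ExteriorAlgebra ℝ W →ₗ[ℝ] ExteriorAlgebra ℝ W :=
    (1/2 : ℝ) • ∑ i, (CliffordAlgebra.contractLeft (b.coord i)) ∘ₗ
      (CliffordAlgebra.contractLeft (σ i)) with hΛ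
  have hΛapp : ∀ x, Λop x = (1/2 : ℝ) • ∑ i, (b.coord i)⌋((σ i)⌋x) := by
    intro x
    simp [hΛ, LinearMap.sum_apply]
  refine ⟨Λop, ?_, ?_, ?_⟩
  · -- kills degree 1
    intro x hx
    rw [hΛapp]
    have : ∀ i : Fin (Module.finrank ℝ W), (b.coord i)⌋((σ i)⌋x) = 0 := by
      intro i
      have h0 : (σ i)⌋x ∈ ⋀[ℝ]^0 W := contract_mem (σ i) (by simpa using hx)
      exact contract_mem_one' (by simpa using h0)
    rw [Finset.sum_congr rfl fun i _ => this i]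
    simp
  · -- maps degree 3 to degree 1
    intro x hx
    rw [hΛapp]
    refine Submodule.smul_mem _ _ (Submodule.sum_mem _ fun i _ => ?_)
    have h2 : (σ i)⌋x ∈ ⋀[ℝ]^2 W := contract_mem (σ i) (by simpa using hx)
    exact contract_mem (b.coord i) (by simpa using h2)
  · -- the commutator identity
    intro q x hx
    have hcard : ∑ i, b.coord i (b i) = ((2*n : ℕ) : ℝ) := by
      rw [← hdim]
      simp [Module.Basis.coord_apply, Module.Basis.repr_self]
    have step : ∀ i : Fin (Module.finrank ℝ W),
        (b.coord i)⌋((σ i)⌋(a * x))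
          = b.coord i (b i) • x - ι ℝ (b i) * ((b.coord i)⌋x)
            + (ι ℝ (T (b.coord i)) * ((σ i)⌋x) + a * ((b.coord i)⌋((σ i)⌋x))) := by
      intro i
      rw [contract_two_mul (σ i) ha, ← hT (σ i), hTσ, map_add,
        CliffordAlgebra.contractLeft_ι_mul, contract_two_mul (b.coord i) ha, ← hT (b.coord i)]
    have hsum : ∑ i, (b.coord i)⌋((σ i)⌋(a * x))
        = ((2*n : ℕ) : ℝ) • x - (q : ℝ) • x - (q : ℝ) • x
          + a * ∑ i, (b.coord i)⌋((σ i)⌋x) := by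
      rw [Finset.sum_congr rfl fun i _ => step i]
      rw [Finset.sum_add_distrib, Finset.sum_add_distrib, Finset.sum_sub_distrib]
      have e1 : ∑ i, b.coord i (b i) • x = ((2*n : ℕ) : ℝ) • x := by
        rw [← Finset.sum_smul, hcard]
      have e2 : ∑ i, ι ℝ (b i) * ((b.coord i)⌋x) = (q : ℝ) • x :=
        euler b b.coord hdual1 hx
      have e3 : ∑ i, ι ℝ (T (b.coord i)) * ((σ i)⌋x) = -((q : ℝ) • x) := by
        have := euler (fun i => T (b.coord i)) (fun i => -(σ i)) hdual2 hx
        have hneg : ∀ i : Fin (Module.finrank ℝ W),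
            ι ℝ (T (b.coord i)) * ((-(σ i))⌋x) = -(ι ℝ (T (b.coord i)) * ((σ i)⌋x)) := by
          intro i
          rw [map_neg, LinearMap.neg_apply, mul_neg]
        rw [Finset.sum_congr rfl fun i _ => hneg i, Finset.sum_neg_distrib] at this
        exact neg_eq_iff_eq_neg.mp this
      have e4 : ∑ i, a * ((b.coord i)⌋((σ i)⌋x)) = a * ∑ i, (b.coord i)⌋((σ i)⌋x) := by
        rw [Finset.mul_sum]
      rw [e1, e2, e3, e4]
      abel
    rw [hΛapp, hΛapp, hsum, mul_smul_comm]
    push_cast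
    module

/-! ### Iteration and the hard-Lefschetz style injectivity -/

lemma pow_mem_grade {a : ExteriorAlgebra ℝ W} (ha : a ∈ ⋀[ℝ]^2 W) (j : ℕ) :
    a ^ j ∈ ⋀[ℝ]^(2*j) W := by
  induction j with
  | zero => exact Submodule.mem_one.mpr ⟨1, by rw [map_one, pow_zero]⟩
  | succ j ih =>
      have := mem_pow_mul ha ih
      have h : a * a ^ j = a ^ (j+1) := (pow_succ' a j).symm
      rw [h] at this
      have h2 : 2 + 2*j = 2*(j+1) := by ring
      rwa [h2] at this

lemma pow_central {a : ExteriorAlgebra ℝ W} (ha : a ∈ ⋀[ℝ]^2 W) (j : ℕ)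
    (x : ExteriorAlgebra ℝ W) : a ^ j * x = x * a ^ j := by
  induction j with
  | zero => simp
  | succ j ih =>
      rw [pow_succ, mul_assoc, central_of_mem_two ha x, ← mul_assoc, ih, mul_assoc]

lemma iterate_lambda {n : ℕ} {a : ExteriorAlgebra ℝ W} (ha : a ∈ ⋀[ℝ]^2 W)
    {Λop : ExteriorAlgebra ℝ W →ₗ[ℝ] ExteriorAlgebra ℝ W}
    (hcom : ∀ (q : ℕ) (x : ExteriorAlgebra ℝ W), x ∈ ⋀[ℝ]^q W →
      Λop (a * x) = a * Λop x + ((n : ℝ) - q) • x)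
    {q : ℕ} {x : ExteriorAlgebra ℝ W} (hx : x ∈ ⋀[ℝ]^q W) (hkill : Λop x = 0) :
    ∀ m : ℕ, Λop (a ^ (m+1) * x)
      = (((m:ℝ)+1) * ((n : ℝ) - q - m)) • (a ^ m * x) := by
  intro m
  induction m with
  | zero =>
      have := hcom q x hx
      rw [hkill, mul_zero, zero_add] at this
      rw [pow_one, this, pow_zero, one_mul]
      push_cast
      module
  | succ m ih =>
      have hmem : a ^ (m+1) * x ∈ ⋀[ℝ]^(q + 2*(m+1)) W := by
        have := mem_pow_mul (pow_mem_grade ha (m+1)) hx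
        rwa [Nat.add_comm] at this
      have hstep := hcom (q + 2*(m+1)) (a ^ (m+1) * x) hmem
      have hpow : a * (a ^ (m+1) * x) = a ^ (m+2) * x := by
        rw [← mul_assoc, ← pow_succ']
      rw [hpow, ih] at hstep
      rw [hstep, mul_smul_comm, ← mul_assoc, ← pow_succ', ← add_smul]
      congr 1
      push_cast
      ring

lemma smul_elim {c : ℝ} (hc : c ≠ 0) {x : ExteriorAlgebra ℝ W} (h : c • x = 0) : x = 0 := by
  have h2 : c⁻¹ • (c • x) = x := by rw [smul_smul, inv_mul_cancel₀ hc, one_smul]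
  rw [← h2, h, smul_zero]

lemma key_injectivity [FiniteDimensional ℝ W] {n : ℕ} (hdim : Module.finrank ℝ W = 2*n)
    (hn4 : 4 ≤ n) {a : ExteriorAlgebra ℝ W} (ha : a ∈ ⋀[ℝ]^2 W) (hnd : a ^ n ≠ 0)
    {α : ExteriorAlgebra ℝ W} (hα : α ∈ ⋀[ℝ]^3 W) {k : ℕ} (hk1 : 1 ≤ k) (hk : k + 3 ≤ n)
    (h0 : a ^ k * α = 0) : α = 0 := by
  obtain ⟨Λop, hkill1, hmap31, hcom⟩ := exists_lambda hdim (by omega) ha hnd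
  have hne1 : ((n:ℝ) - 1) ≠ 0 := by
    have : (4:ℝ) ≤ (n:ℝ) := by exact_mod_cast hn4
    intro h; linarith [sub_eq_zero.mp h]
  set β : ExteriorAlgebra ℝ W := ((n:ℝ)-1)⁻¹ • Λop α with hβdef
  have hβ1 : β ∈ ⋀[ℝ]^1 W := Submodule.smul_mem _ _ (hmap31 α hα)
  have hβkill : Λop β = 0 := hkill1 β hβ1
  set γ : ExteriorAlgebra ℝ W := α - a * β with hγdef
  have hγ3 : γ ∈ ⋀[ℝ]^3 W := Submodule.sub_mem _ hα (mem_pow_mul ha hβ1)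
  have hγkill : Λop γ = 0 := by
    have hc : ((n:ℝ) - ((1:ℕ):ℝ)) = ((n:ℝ) - 1) := by norm_num
    rw [hγdef, map_sub, hcom 1 β hβ1, hβkill, mul_zero, zero_add, hβdef, smul_smul, hc,
      mul_inv_cancel₀ hne1, one_smul, sub_self]
  have hsplit : a ^ k * γ + a ^ (k+1) * β = 0 := by
    rw [hγdef, mul_sub, ← mul_assoc, ← pow_succ, h0, zero_sub]
    simp
  have ITγ := fun m => iterate_lambda ha hcom hγ3 hγkill m
  have ITβ := fun m => iterate_lambda ha hcom hβ1 hβkill m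
  -- descent
  have claim : ∀ t : ℕ, t ≤ k → ∃ c d : ℝ, c ≠ 0 ∧ d ≠ 0 ∧
      c • (a ^ (k-t) * γ) + d • (a ^ (k-t+1) * β) = 0 := by
    intro t
    induction t with
    | zero => exact fun _ => ⟨1, 1, one_ne_zero, one_ne_zero, by
        simpa using hsplit⟩
    | succ t ih =>
        intro ht
        obtain ⟨c, d, hc, hd, heq⟩ := ih (by omega)
        set i := k - (t+1) with hi
        have h1 : k - t = i + 1 := by omega
        have h2 : k - t + 1 = (i + 1) + 1 := by omega
        rw [h1] at heq
        have happ := congrArg Λop heq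
        rw [map_add, map_smul, map_smul, map_zero, ITγ i, ITβ (i+1)] at happ
        rw [smul_smul, smul_smul] at happ
        have hi4 : (i:ℝ) + 4 ≤ (n:ℝ) := by
          have : i + 4 ≤ n := by omega
          exact_mod_cast this
        refine ⟨c * (((i:ℝ)+1) * ((n:ℝ) - 3 - i)),
          d * (((i:ℝ)+1+1) * ((n:ℝ) - 1 - (i+1))), ?_, ?_, ?_⟩
        · refine mul_ne_zero hc (mul_ne_zero (by positivity) ?_)
          intro h
          have := sub_eq_zero.mp h
          linarith
        · refine mul_ne_zero hd (mul_ne_zero (by positivity) ?_)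
          intro h
          have := sub_eq_zero.mp h
          linarith
        · convert happ using 3 <;> push_cast <;> ring
  obtain ⟨c, d, hc, hd, heq⟩ := claim k le_rfl
  rw [Nat.sub_self, pow_zero, one_mul, zero_add, pow_one] at heq
  -- one more application of Λop kills γ-term and shows β = 0
  have happ := congrArg Λop heq
  rw [map_add, map_smul, map_smul, map_zero, hγkill, smul_zero, zero_add,
    hcom 1 β hβ1, hβkill, mul_zero, zero_add, smul_smul] at happ
  have hβ0 : β = 0 :=
    smul_elim (mul_ne_zero hd (by simpa using hne1)) happ
  have hγ0 : γ = 0 := by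
    rw [hβ0, mul_zero, smul_zero, add_zero] at heq
    exact smul_elim hc heq
  have : α = γ + a * β := by rw [hγdef]; abel
  rw [this, hβ0, hγ0, mul_zero, add_zero]

end LCKaux

open ExteriorAlgebra

/-- In dimension `2n`, for `2 ≤ s ≤ n−2`: if `ω` is a non-degenerate 2-form (`ω^n ≠ 0`) and
`θ` a 1-form with `d(ω^s) = θ∧ω^s` (where `d(ω^s) = s·dω∧ω^{s−1}` and `dω` is a 3-form),
then `dω = (1/s)·θ∧ω`, i.e. `ω` is locally conformal Kähler-type. -/
theorem stmt9 {W : Type*} [AddCommGroup W] [Module ℝ W] [FiniteDimensional ℝ W]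
    (n s : ℕ) (hdim : Module.finrank ℝ W = 2 * n) (hs2 : 2 ≤ s) (hsn : s ≤ n - 2)
    (d : ExteriorAlgebra ℝ W →ₗ[ℝ] ExteriorAlgebra ℝ W)
    (θ : W) (ω : ⋀[ℝ]^2 W)
    (hnd : (ω : ExteriorAlgebra ℝ W) ^ n ≠ 0)
    (hpow : d ((ω : ExteriorAlgebra ℝ W) ^ s)
      = (s : ℝ) • (d (ω : ExteriorAlgebra ℝ W) * (ω : ExteriorAlgebra ℝ W) ^ (s - 1)))
    (hdω3 : d (ω : ExteriorAlgebra ℝ W) ∈ ⋀[ℝ]^3 W)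
    (heq : d ((ω : ExteriorAlgebra ℝ W) ^ s)
      = ExteriorAlgebra.ι ℝ θ * (ω : ExteriorAlgebra ℝ W) ^ s) :
    d (ω : ExteriorAlgebra ℝ W)
      = ((1 : ℝ) / s) • (ExteriorAlgebra.ι ℝ θ * (ω : ExteriorAlgebra ℝ W)) := by
  have hn4 : 4 ≤ n := by omega
  set a : ExteriorAlgebra ℝ W := (ω : ExteriorAlgebra ℝ W) with hadef
  have ha : a ∈ ⋀[ℝ]^2 W := SetLike.coe_mem ω
  have hs0 : (s:ℝ) ≠ 0 := Nat.cast_ne_zero.mpr (by omega)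
  set α : ExteriorAlgebra ℝ W := (s:ℝ) • (d a) - ι ℝ θ * a with hα
  have hα3 : α ∈ ⋀[ℝ]^3 W := Submodule.sub_mem _ (Submodule.smul_mem _ _ hdω3)
    (LCKaux.mem_pow_mul (LCKaux.ι_mem_one θ) ha)
  have hss : s - 1 + 1 = s := by omega
  have h0 : a ^ (s-1) * α = 0 := by
    have hmain : (s:ℝ) • (d a * a^(s-1)) = ι ℝ θ * a ^ s := hpow.symm.trans heq
    rw [hα, mul_sub, mul_smul_comm (s:ℝ), LCKaux.pow_central ha (s-1) (d a), hmain,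
      LCKaux.pow_central ha (s-1) (ι ℝ θ * a), mul_assoc, ← pow_succ', hss, sub_self]
  have hαz : α = 0 := LCKaux.key_injectivity hdim hn4 ha hnd hα3 (by omega) (by omega) h0
  have hfin : (s:ℝ) • d a = ι ℝ θ * a := by
    rw [hα] at hαz
    exact sub_eq_zero.mp hαz
  rw [one_div, eq_inv_smul_iff₀ hs0]
  exact hfin
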